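/- Let d ≥ 1 and let D be the d²×d² matrix D = Σ_{j=1}^{d} |j⟩⟨j| ⊗ |j⟩⟨j|. Then the partial trace over the first d-dimensional tensor factor of the entrywise absolute value |D − (1/d) 1| = √((D − (1/d)1)† (D − (1/d)1)) equals (2 − 2/d) 1_d, and hence its ℓ²→ℓ² operator norm equals 2 − 2/d. -/

import Mathlib

open Matrix Kronecker
open scoped ComplexOrder

/-- The partial trace over the first tensor factor:
`(Tr₁ M)_{a,b} = Σ_c M_{(c,a),(c,b)}`. -/
noncomputable def ptrFirst {n m : Type*} [Fintype n]
    (M : Matrix (n × m) (n × m) ℂ) : Matrix m m ℂ :=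
  Matrix.of fun a b => ∑ c : n, M (c, a) (c, b)

/-- The positive semidefinite square root of a positive semidefinite matrix
(the definition removed from Mathlib, restored with its old meaning). -/
noncomputable def Matrix.PosSemidef.sqrt {n : Type*} [Fintype n] [DecidableEq n]
    {A : Matrix n n ℂ} (hA : A.PosSemidef) : Matrix n n ℂ :=
  hA.1.eigenvectorUnitary.1 * diagonal ((↑) ∘ (√·) ∘ hA.1.eigenvalues) *
    (star hA.1.eigenvectorUnitary : Matrix n n ℂ)

open scoped MatrixOrder in
theorem Matrix.PosSemidef.eq_sqrt_of_sq_eq {n : Type*} [Fintype n] [DecidableEq n]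
    {A : Matrix n n ℂ} (hA : A.PosSemidef) {B : Matrix n n ℂ} (hB : B.PosSemidef)
    (hAB : A ^ 2 = B) : A = hB.sqrt := by
  have h1 : hB.sqrt = cfc Real.sqrt B := by
    rw [hB.1.cfc_eq, IsHermitian.cfc, Unitary.conjStarAlgAut_apply]; rfl
  have h2 : CFC.sqrt B = A := CFC.sqrt_unique (by rw [← hAB, sq]) hA.nonneg
  rw [h1, ← cfcₙ_eq_cfc (hf0 := Real.sqrt_zero), ← CFC.sqrt_eq_real_sqrt B hB.nonneg, h2]

set_option synthInstance.maxHeartbeats 1000000 in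
set_option maxHeartbeats 2000000 in
/-- For `D = Σ_j |j⟩⟨j| ⊗ |j⟩⟨j|`, the partial trace over the first factor of
`|D − (1/d) 1| = √((D − (1/d)1)†(D − (1/d)1))` equals `(2 − 2/d) 1_d`, and hence its
`ℓ² → ℓ²` operator norm equals `2 − 2/d`. -/
theorem ptrFirst_abs_choi_difference (d : ℕ) (hd : 1 ≤ d)
    (D : Matrix (Fin d × Fin d) (Fin d × Fin d) ℂ)
    (hD : D = ∑ j : Fin d,
      (Matrix.single j j (1 : ℂ)) ⊗ₖ (Matrix.single j j (1 : ℂ)))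
    (M : Matrix (Fin d × Fin d) (Fin d × Fin d) ℂ)
    (hM : M = D - (1 / (d : ℂ)) • (1 : Matrix (Fin d × Fin d) (Fin d × Fin d) ℂ)) :
    ptrFirst (Matrix.posSemidef_conjTranspose_mul_self M).sqrt
        = ((2 : ℂ) - 2 / (d : ℂ)) • (1 : Matrix (Fin d) (Fin d) ℂ) ∧
    ‖Matrix.toEuclideanCLM (𝕜 := ℂ)
        (ptrFirst (Matrix.posSemidef_conjTranspose_mul_self M).sqrt)‖
        = 2 - 2 / (d : ℝ) := by
  have hd0 : (d : ℂ) ≠ 0 := Nat.cast_ne_zero.mpr (by omega)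
  have hdR : (1 : ℝ) ≤ (d : ℝ) := by exact_mod_cast hd
  set m : Fin d × Fin d → ℂ := fun p => (if p.1 = p.2 then 1 else 0) - 1 / d with hm
  have hDdiag : D = Matrix.diagonal
      (fun p : Fin d × Fin d => if p.1 = p.2 then (1 : ℂ) else 0) := by
    rw [hD]
    ext ⟨c, a⟩ ⟨c', a'⟩
    simp only [Matrix.sum_apply, Matrix.kroneckerMap_apply, Matrix.single,
      Matrix.of_apply, Matrix.diagonal_apply]
    rw [Finset.sum_eq_single c (fun j _ hj => by simp [hj]) (by simp)]
    split_ifs <;> simp_all [Prod.ext_iff] <;> aesop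
  have hMdiag : M = Matrix.diagonal m := by
    rw [hM, hDdiag]
    ext p q
    by_cases h : p = q <;>
      simp [h, hm, Matrix.diagonal_apply, Matrix.one_apply, Matrix.sub_apply]
  set s : Fin d × Fin d → ℂ := fun p => if p.1 = p.2 then 1 - 1 / d else 1 / d with hs
  have hs_nonneg : ∀ p, 0 ≤ s p := by
    intro p
    have h1 : (0 : ℝ) ≤ 1 - 1 / d := by
      have : (1 : ℝ) / d ≤ 1 := by rw [div_le_one (by linarith)]; linarith
      linarith
    have h2 : (0 : ℝ) ≤ 1 / d := by positivity
    simp only [hs]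
    split
    · rw [show (1 - 1 / (d:ℂ)) = ((1 - 1 / (d:ℝ) : ℝ) : ℂ) by push_cast; ring]
      exact_mod_cast h1
    · rw [show (1 / (d:ℂ)) = ((1 / (d:ℝ) : ℝ) : ℂ) by push_cast; ring]
      exact_mod_cast h2
  have hSpsd : Matrix.PosSemidef (Matrix.diagonal s) := .diagonal hs_nonneg
  have hsq : (Matrix.diagonal s) ^ 2 = Mᴴ * M := by
    rw [hMdiag, Matrix.diagonal_conjTranspose, Matrix.diagonal_mul_diagonal, pow_two,
      Matrix.diagonal_mul_diagonal]
    refine congrArg Matrix.diagonal (funext fun p => ?_)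
    simp only [hs, hm, Pi.mul_apply, Pi.star_apply]
    split_ifs <;>
      simp only [Complex.star_def, map_sub, _root_.map_one, _root_.map_zero, map_div₀,
        Complex.conj_natCast] <;> ring
  have hSsqrt : Matrix.diagonal s = (Matrix.posSemidef_conjTranspose_mul_self M).sqrt :=
    hSpsd.eq_sqrt_of_sq_eq _ hsq
  have hptr : ptrFirst (Matrix.posSemidef_conjTranspose_mul_self M).sqrt
      = ((2 : ℂ) - 2 / (d : ℂ)) • (1 : Matrix (Fin d) (Fin d) ℂ) := by
    rw [← hSsqrt]
    ext a b
    simp only [ptrFirst, Matrix.of_apply, Matrix.smul_apply, Matrix.one_apply, smul_eq_mul]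
    by_cases hab : a = b
    · subst hab
      have h1 : ∀ c : Fin d, (Matrix.diagonal s) (c, a) (c, a)
          = 1 / (d:ℂ) + (if c = a then 1 - 2 / (d:ℂ) else 0) := by
        intro c
        by_cases hca : c = a <;> simp [hs, hca, Matrix.diagonal_apply_eq] <;> ring
      rw [Finset.sum_congr rfl fun c _ => h1 c, Finset.sum_add_distrib, Finset.sum_const,
        Finset.sum_ite_eq' Finset.univ a (fun _ => (1:ℂ) - 2 / (d:ℂ))]
      simp only [Finset.mem_univ, if_true, Finset.card_univ, Fintype.card_fin,
        nsmul_eq_mul, if_pos rfl, mul_one]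
      field_simp
      ring
    · have h1 : ∀ c : Fin d, (Matrix.diagonal s) (c, a) (c, b) = 0 := fun c =>
        Matrix.diagonal_apply_ne _ (by simp [Prod.ext_iff, hab])
      rw [Finset.sum_congr rfl fun c _ => h1 c]
      simp [hab]
  refine ⟨hptr, ?_⟩
  haveI : Nonempty (Fin d) := ⟨⟨0, by omega⟩⟩
  haveI : Nontrivial (EuclideanSpace ℂ (Fin d)) := by
    refine ⟨(WithLp.equiv _ _).symm 0, (WithLp.equiv _ _).symm 1, ?_⟩
    simp only [ne_eq, EmbeddingLike.apply_eq_iff_eq]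
    exact fun h => one_ne_zero (congrFun h.symm (Classical.arbitrary _))
  rw [hptr]
  set c : ℂ := (2 : ℂ) - 2 / (d : ℂ) with hc
  set T := Matrix.toEuclideanCLM (𝕜 := ℂ) (c • (1 : Matrix (Fin d) (Fin d) ℂ)) with hT
  have hTx : ∀ x : EuclideanSpace ℂ (Fin d), T x = c • x := by
    intro x
    apply (WithLp.equiv 2 (Fin d → ℂ)).injective
    rw [hT, WithLp.equiv_apply, Matrix.ofLp_toEuclideanCLM]
    funext i
    simp [Matrix.mulVec, dotProduct, Matrix.smul_apply, Matrix.one_apply,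
      Finset.mul_sum, mul_ite, WithLp.equiv, Pi.smul_apply, smul_eq_mul]
  have hnc : ‖c‖ = 2 - 2 / (d : ℝ) := by
    have h2 : c = (((2 : ℝ) - 2 / (d : ℝ) : ℝ) : ℂ) := by rw [hc]; push_cast; ring
    have h3 : (2 : ℝ) / d ≤ 2 := by rw [div_le_iff₀ (by linarith)]; nlinarith
    rw [h2, Complex.norm_real, Real.norm_eq_abs, abs_of_nonneg (by linarith)]
  rw [← hnc]
  apply ContinuousLinearMap.opNorm_eq_of_bounds (norm_nonneg c)
  · intro x
    exact le_of_eq (by rw [hTx x, norm_smul])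
  · intro N hN h
    have := h (EuclideanSpace.single (⟨0, by omega⟩ : Fin d) (1 : ℂ))
    rwa [hTx, norm_smul, EuclideanSpace.norm_single, norm_one, mul_one, mul_one] at this
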